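/- Let τ₀ > 0 and let φ : (τ₀, ∞) → ℝ be differentiable with dφ/dτ = (−1 + τ·sin φ·(cos φ − sin φ))/(2τ(1 + τ)) and cos(φ(τ) − π/8) ≠ 0 for all τ > τ₀. Then u(τ) = tan(φ(τ) − π/8) satisfies the Riccati equation du/dτ = b(τ) − a(τ)·u(τ)², where a(τ) = ((√2 + 1)τ + 2)/(4τ(τ + 1)) and b(τ) = ((√2 − 1)τ − 2)/(4τ(τ + 1)). -/

import Mathlib

open Real

theorem angular_equation_to_riccati
    (τ₀ : ℝ) (hτ₀ : 0 < τ₀) (φ : ℝ → ℝ)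
    (hφ : ∀ τ : ℝ, τ₀ < τ → HasDerivAt φ
      ((-1 + τ * Real.sin (φ τ) * (Real.cos (φ τ) - Real.sin (φ τ))) /
        (2 * τ * (1 + τ))) τ)
    (hcos : ∀ τ : ℝ, τ₀ < τ → Real.cos (φ τ - π / 8) ≠ 0) :
    ∀ τ : ℝ, τ₀ < τ →
      HasDerivAt (fun s => Real.tan (φ s - π / 8))
        (((Real.sqrt 2 - 1) * τ - 2) / (4 * τ * (τ + 1))
          - ((Real.sqrt 2 + 1) * τ + 2) / (4 * τ * (τ + 1))
            * (Real.tan (φ τ - π / 8)) ^ 2) τ := by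
  intro τ hτ
  have hτpos : 0 < τ := hτ₀.trans hτ
  have hτ1 : (0:ℝ) < τ + 1 := by linarith
  have hc := hcos τ hτ
  have hψ : HasDerivAt (fun s => φ s - π/8)
      ((-1 + τ * Real.sin (φ τ) * (Real.cos (φ τ) - Real.sin (φ τ))) /
        (2 * τ * (1 + τ))) τ := (hφ τ hτ).sub_const _
  have htan := (Real.hasDerivAt_tan hc).comp τ hψ
  refine htan.congr_deriv (Eq.symm ?_)
  set S := Real.sin (φ τ) with hS
  set C := Real.cos (φ τ) with hC
  have hSC : S^2 + C^2 = 1 := Real.sin_sq_add_cos_sq _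
  have h2 : Real.sqrt 2 * Real.sqrt 2 = 2 := Real.mul_self_sqrt (by norm_num)
  have hs2 : Real.sqrt 2 ≠ 0 := by positivity
  have hcos2 : Real.cos (φ τ - π/8) ^ 2
      = 1/2 + (C^2 - S^2 + 2*S*C) / Real.sqrt 2 / 2 := by
    rw [Real.cos_sq]
    have h : 2 * (φ τ - π/8) = 2 * φ τ - π/4 := by ring
    rw [h, Real.cos_sub, Real.cos_pi_div_four, Real.sin_pi_div_four,
        Real.cos_two_mul, Real.sin_two_mul, ← hS, ← hC]
    have hC2 : 2 * C ^ 2 - 1 = C^2 - S^2 := by nlinarith [hSC]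
    rw [hC2]
    field_simp
    linear_combination (2*C*S + C^2 - S^2) * h2
  have hcos2' : 2 * Real.sqrt 2 * Real.cos (φ τ - π/8) ^ 2
      = Real.sqrt 2 + C^2 - S^2 + 2*S*C := by
    rw [hcos2]; field_simp; ring
  have hsin2 : Real.sin (φ τ - π/8) ^ 2 = 1 - Real.cos (φ τ - π/8) ^ 2 := by
    have h := Real.sin_sq_add_cos_sq (φ τ - π/8)
    linarith
  have hK : Real.cos (φ τ - π/8) ^ 2 ≠ 0 := pow_ne_zero 2 hc
  have hτne : τ ≠ 0 := ne_of_gt hτpos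
  have hτ1ne : τ + 1 ≠ 0 := ne_of_gt hτ1
  rw [Real.tan_eq_sin_div_cos, div_pow, hsin2]
  set K := Real.cos (φ τ - π/8) ^ 2 with hKdef
  have key : ((Real.sqrt 2 - 1)*τ - 2) * K - ((Real.sqrt 2 + 1)*τ + 2) * (1 - K)
      = 2 * (-1 + τ * S * (C - S)) := by
    linear_combination τ * hcos2' + τ * hSC
  have h4 : 4*τ*(τ+1) ≠ 0 := by positivity
  have step : ((Real.sqrt 2 - 1) * τ - 2) / (4 * τ * (τ + 1))
      - ((Real.sqrt 2 + 1) * τ + 2) / (4 * τ * (τ + 1)) * ((1 - K)/K)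
      = (((Real.sqrt 2 - 1)*τ - 2) * K - ((Real.sqrt 2 + 1)*τ + 2) * (1 - K))
          / (4*τ*(τ+1)*K) := by
    field_simp
  rw [step, key]
  field_simp
  ring
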